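/- Let Λ ⊆ R^m be a lattice, t ∈ R^m a target, v ∈ Λ a nonzero lattice vector with ‖v‖ ≤ γλ₁(Λ), and suppose d(t,Λ) ≥ λ₁(Λ)/(2γ). Let t' and Λ' be the projections of t and Λ orthogonal to v. If z' ∈ Λ' satisfies ‖z' − t'‖² ≤ (n−1)γ⁴ d(t',Λ')², then there exists z ∈ Λ projecting to z' with ‖z − t‖² ≤ n γ⁴ d(t,Λ)². -/
import Mathlib


open scoped RealInnerProductSpace

private lemma pyth_aux {m : ℕ} (v x : EuclideanSpace ℝ (Fin m)) (hv : v ≠ 0) :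
    ‖x‖ ^ 2 = ‖x - (⟪x, v⟫ / ⟪v, v⟫) • v‖ ^ 2 + (⟪x, v⟫ / ⟪v, v⟫) ^ 2 * ⟪v, v⟫ := by
  have hν : (0:ℝ) < ⟪v, v⟫ := by
    rw [real_inner_self_eq_norm_sq]; exact pow_pos (norm_pos_iff.mpr hv) 2
  set c : ℝ := ⟪x, v⟫ / ⟪v, v⟫ with hc
  have hx : x = (x - c • v) + c • v := by abel
  have horth : ⟪x - c • v, c • v⟫ = 0 := by
    have h0 : ⟪x - c • v, v⟫ = 0 := by
      rw [inner_sub_left, real_inner_smul_left, hc, div_mul_cancel₀ _ hν.ne', sub_self]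
    rw [real_inner_smul_right, h0, mul_zero]
  have h1 : ‖c • v‖ ^ 2 = c ^ 2 * ⟪v, v⟫ := by
    rw [norm_smul, real_inner_self_eq_norm_sq, mul_pow]
    simp [sq_abs]
  calc ‖x‖ ^ 2 = ‖(x - c • v) + c • v‖ ^ 2 := by rw [← hx]
    _ = ‖x - c • v‖ ^ 2 + 2 * ⟪x - c • v, c • v⟫ + ‖c • v‖ ^ 2 := norm_add_sq_real _ _
    _ = _ := by rw [horth, h1]; ring

theorem recursion_step_cvp {m n : ℕ} (b : Fin n → EuclideanSpace ℝ (Fin m))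
    (hb : LinearIndependent ℝ b)
    (L : Set (EuclideanSpace ℝ (Fin m)))
    (hL : L = (Submodule.span ℤ (Set.range b) : Submodule ℤ (EuclideanSpace ℝ (Fin m))))
    (γ : ℝ) (hγ : 1 ≤ γ)
    (t : EuclideanSpace ℝ (Fin m))
    (v : EuclideanSpace ℝ (Fin m)) (hvL : v ∈ L) (hv : v ≠ 0)
    (hvshort : ‖v‖ ≤ γ * sInf {r : ℝ | ∃ u ∈ L, u ≠ 0 ∧ ‖u‖ = r})
    (hfar : sInf {r : ℝ | ∃ u ∈ L, u ≠ 0 ∧ ‖u‖ = r} / (2 * γ) ≤ Metric.infDist t L)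
    (z' : EuclideanSpace ℝ (Fin m))
    (hz'mem : z' ∈ (fun u => u - (⟪u, v⟫ / ⟪v, v⟫) • v) '' L)
    (hz' : ‖z' - (t - (⟪t, v⟫ / ⟪v, v⟫) • v)‖ ^ 2 ≤
      (n - 1 : ℝ) * γ ^ 4 *
        Metric.infDist (t - (⟪t, v⟫ / ⟪v, v⟫) • v)
          ((fun u => u - (⟪u, v⟫ / ⟪v, v⟫) • v) '' L) ^ 2) :
    ∃ z ∈ L, z - (⟪z, v⟫ / ⟪v, v⟫) • v = z' ∧
      ‖z - t‖ ^ 2 ≤ (n : ℝ) * γ ^ 4 * Metric.infDist t L ^ 2 := by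
  have hν : (0:ℝ) < ⟪v, v⟫ := by
    rw [real_inner_self_eq_norm_sq]; exact pow_pos (norm_pos_iff.mpr hv) 2
  have hγ0 : (0:ℝ) < γ := lt_of_lt_of_le one_pos hγ
  obtain ⟨y, hyL, hyz⟩ := hz'mem
  have hn : n ≠ 0 := by
    rintro rfl
    apply hv
    rw [hL] at hvL
    simpa [Set.range_eq_empty] using hvL
  -- notation
  set ν : ℝ := ⟪v, v⟫ with hνdef
  set α : ℝ := (⟪t, v⟫ - ⟪y, v⟫) / ν with hα
  set k : ℤ := round α with hk
  set z : EuclideanSpace ℝ (Fin m) := y + (k : ℝ) • v with hz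
  -- membership
  have hzL : z ∈ L := by
    rw [hL] at hyL hvL ⊢
    exact Submodule.add_mem _ hyL ((Int.cast_smul_eq_zsmul ℝ k v) ▸ Submodule.smul_mem _ k hvL)
  -- projection of z
  have hinner_z : ⟪z, v⟫ = ⟪y, v⟫ + (k : ℝ) * ν := by
    rw [hz, inner_add_left, real_inner_smul_left]
  have hproj : z - (⟪z, v⟫ / ν) • v = z' := by
    rw [← hyz, hinner_z, hz]
    have : (⟪y, v⟫ + (k : ℝ) * ν) / ν = ⟪y, v⟫ / ν + (k : ℝ) := by
      field_simp
    rw [this, add_smul]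
    module
  refine ⟨z, hzL, hproj, ?_⟩
  -- inner of z - t with v
  have hinner_zt : ⟪z - t, v⟫ / ν = (k : ℝ) - α := by
    rw [inner_sub_left, hinner_z, hα]
    field_simp
    ring
  -- projection is linear on differences
  have hproj_sub : ∀ a c : EuclideanSpace ℝ (Fin m),
      (a - c) - (⟪a - c, v⟫ / ν) • v
        = (a - (⟪a, v⟫ / ν) • v) - (c - (⟪c, v⟫ / ν) • v) := by
    intro a c
    rw [inner_sub_left, sub_div, sub_smul]
    module
  clear_value α k z
  -- distance bounds
  set d : ℝ := Metric.infDist t L with hd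
  have hd0 : 0 ≤ d := by rw [hd]; exact Metric.infDist_nonneg
  clear_value d
  have hlam : sInf {r : ℝ | ∃ u ∈ L, u ≠ 0 ∧ ‖u‖ = r} ≤ 2 * γ * d := by
    have := hfar
    rw [div_le_iff₀ (by positivity)] at this
    linarith only [this]
  have hvd : ‖v‖ ≤ 2 * γ ^ 2 * d := by
    calc ‖v‖ ≤ γ * sInf {r : ℝ | ∃ u ∈ L, u ≠ 0 ∧ ‖u‖ = r} := hvshort
      _ ≤ γ * (2 * γ * d) := mul_le_mul_of_nonneg_left hlam hγ0.le
      _ = 2 * γ ^ 2 * d := by ring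
  have hν_eq : ν = ‖v‖ ^ 2 := by rw [hνdef]; exact real_inner_self_eq_norm_sq v
  -- contraction of projection
  have hcontr' : ∀ x : EuclideanSpace ℝ (Fin m),
      ‖x - (⟪x, v⟫ / ν) • v‖ ≤ ‖x‖ := by
    intro x
    have h := pyth_aux v x hv
    have h1 : (⟪x, v⟫ / ν) ^ 2 * ν ≥ 0 := by positivity
    nlinarith only [h, h1, norm_nonneg (x - (⟪x, v⟫ / ν) • v), norm_nonneg x]
  -- infDist of projections
  set t' : EuclideanSpace ℝ (Fin m) := t - (⟪t, v⟫ / ν) • v with ht'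
  set L' : Set (EuclideanSpace ℝ (Fin m)) := (fun u => u - (⟪u, v⟫ / ν) • v) '' L with hL'
  have hLne : L.Nonempty := ⟨y, hyL⟩
  have hd' : Metric.infDist t' L' ≤ d := by
    rw [hd]
    conv_rhs => rw [Metric.infDist_eq_iInf]
    haveI : Nonempty L := hLne.to_subtype
    apply le_ciInf
    intro u
    calc Metric.infDist t' L' ≤ dist t' (u.1 - (⟪u.1, v⟫ / ν) • v) :=
          Metric.infDist_le_dist_of_mem ⟨u.1, u.2, rfl⟩
      _ ≤ dist t u.1 := by
          rw [dist_eq_norm, dist_eq_norm, ← hproj_sub]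
          exact hcontr' _
  -- main estimate
  have hmain : ‖z - t‖ ^ 2 = ‖z' - t'‖ ^ 2 + ((k : ℝ) - α) ^ 2 * ν := by
    have h := pyth_aux v (z - t) hv
    rw [hproj_sub z t, hproj, hinner_zt, ← ht', ← hνdef] at h
    exact h
  have hround : |α - (k : ℝ)| ≤ 1 / 2 := by rw [hk]; exact abs_sub_round α
  have hsq : ((k : ℝ) - α) ^ 2 ≤ 1 / 4 := by
    have h2 : ((k : ℝ) - α) ^ 2 = |α - (k : ℝ)| ^ 2 := by rw [sq_abs]; ring
    have h3 : |α - (k : ℝ)| ^ 2 ≤ (1 / 2) ^ 2 :=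
      pow_le_pow_left₀ (abs_nonneg _) hround 2
    rw [h2]
    linarith only [h3]
  have hterm2 : ((k : ℝ) - α) ^ 2 * ν ≤ γ ^ 4 * d ^ 2 := by
    have hv2 : ν ≤ 4 * γ ^ 4 * d ^ 2 := by
      rw [hν_eq]
      calc ‖v‖ ^ 2 ≤ (2 * γ ^ 2 * d) ^ 2 := pow_le_pow_left₀ (norm_nonneg v) hvd 2
        _ = 4 * γ ^ 4 * d ^ 2 := by ring
    calc ((k : ℝ) - α) ^ 2 * ν ≤ (1 / 4) * ν := mul_le_mul_of_nonneg_right hsq hν.le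
      _ ≤ (1 / 4) * (4 * γ ^ 4 * d ^ 2) := by linarith only [hv2]
      _ = γ ^ 4 * d ^ 2 := by ring
  have hterm1 : ‖z' - t'‖ ^ 2 ≤ ((n : ℝ) - 1) * γ ^ 4 * d ^ 2 := by
    have hn1 : (1 : ℝ) ≤ (n : ℝ) := by exact_mod_cast Nat.one_le_iff_ne_zero.mpr hn
    have hd'0 : 0 ≤ Metric.infDist t' L' := Metric.infDist_nonneg
    have hsqd : Metric.infDist t' L' ^ 2 ≤ d ^ 2 := pow_le_pow_left₀ hd'0 hd' 2
    have hcoef : (0:ℝ) ≤ ((n : ℝ) - 1) * γ ^ 4 :=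
      mul_nonneg (by linarith only [hn1]) (by positivity)
    calc ‖z' - t'‖ ^ 2 ≤ ((n : ℝ) - 1) * γ ^ 4 * Metric.infDist t' L' ^ 2 := hz'
      _ ≤ ((n : ℝ) - 1) * γ ^ 4 * d ^ 2 := mul_le_mul_of_nonneg_left hsqd hcoef
  calc ‖z - t‖ ^ 2 = ‖z' - t'‖ ^ 2 + ((k : ℝ) - α) ^ 2 * ν := hmain
    _ ≤ ((n : ℝ) - 1) * γ ^ 4 * d ^ 2 + γ ^ 4 * d ^ 2 := add_le_add hterm1 hterm2
    _ = (n : ℝ) * γ ^ 4 * d ^ 2 := by ring
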